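/- Let X_n be the Class DIII Wigner-type ensemble, let a ≠ b in [n], let Δ be a Δ-matrix, and write nΔ + A(a,b) = [[p₁,q₁],[p₂,q₂]]. Then E[a_n(p₁,q₁)·a_n(p₂,q₂)] = −σ² if Δ is one of [[0,0],[0,0]], [[1,1],[1,1]], [[0,1],[0,1]], [[1,0],[1,0]], [[1,0],[0,1]], [[0,1],[1,0]], and E[a_n(p₁,q₁)·a_n(p₂,q₂)] = σ² if Δ is [[0,0],[1,1]] or [[1,1],[0,0]]. -/

import Mathlib

open MeasureTheory ProbabilityTheory Matrix

noncomputable section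

/-- `blk d a` is index `a` in the first block row/column if `d = 0`, and in the
second block row/column otherwise (encoding `n·d + a` in `[2n]`). -/
def blk {n : ℕ} (d : ℕ) (a : Fin n) : Fin n ⊕ Fin n :=
  if d = 0 then Sum.inl a else Sum.inr a

/-- A Δ-matrix: a `2 × 2` matrix with entries in `{0,1}` whose entries sum to an
even number. -/
def IsDelta (D : Matrix (Fin 2) (Fin 2) ℕ) : Prop :=
  (∀ i j, D i j ≤ 1) ∧ Even (D 0 0 + D 0 1 + D 1 0 + D 1 1)

/-- The (unnormalized) class DIII block matrix built from `X₁, X₂`; its `(p,q)` entry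
is `a_n(p,q)`, the `(p,q)` entry of `√(2n)·X_n`. -/
def dIIIBlock {n : ℕ} (X₁ X₂ : Matrix (Fin n) (Fin n) ℂ) :
    Matrix (Fin n ⊕ Fin n) (Fin n ⊕ Fin n) ℂ :=
  Matrix.fromBlocks X₁ X₂ X₂ (-X₁)

lemma imSq (z : ℂ) (h : z.re = 0) : z * z = -(((‖z‖ : ℝ))^2 : ℂ) := by
  have h2 : (((‖z‖ : ℝ))^2 : ℂ) = (Complex.normSq z : ℂ) := by
    norm_cast; exact Complex.sq_norm z
  rw [h2]
  apply Complex.ext <;> simp [Complex.normSq_apply, Complex.mul_re, Complex.mul_im, h]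

theorem stmt9
    {Ω : Type*} [MeasurableSpace Ω] (μ : Measure Ω) [IsProbabilityMeasure μ]
    (σ : ℝ) (hσ : 0 < σ)
    (X : (n : ℕ) → Fin 2 → Ω → Matrix (Fin n) (Fin n) ℂ)
    (hmeas : ∀ n i a b, Measurable fun ω => X n i ω a b)
    (him : ∀ n i ω a b, (X n i ω a b).re = 0)
    (hskew : ∀ n i ω a b, X n i ω b a = - X n i ω a b)
    (hindep : ∀ n, iIndepFun
      (fun (v : {v : Fin 2 × Fin n × Fin n // v.2.1 < v.2.2}) ω =>
        X n v.1.1 ω v.1.2.1 v.1.2.2) μ)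
    (hcent : ∀ n i a b, ∫ ω, X n i ω a b ∂μ = 0)
    (hvar : ∀ n i (a b : Fin n), a ≠ b → ∫ ω, ‖X n i ω a b‖ ^ 2 ∂μ = σ ^ 2)
    (hmom : ∀ k : ℕ, ∃ C : ℝ, ∀ n i (a b : Fin n),
      ∫ ω, ‖X n i ω a b‖ ^ k ∂μ ≤ C)
    (n : ℕ) (a b : Fin n) (hab : a ≠ b)
    (Δ : Matrix (Fin 2) (Fin 2) ℕ) (hΔ : IsDelta Δ) :
    ((Δ = !![0,0;0,0] ∨ Δ = !![1,1;1,1] ∨ Δ = !![0,1;0,1] ∨ Δ = !![1,0;1,0] ∨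
        Δ = !![1,0;0,1] ∨ Δ = !![0,1;1,0]) →
      ∫ ω, dIIIBlock (X n 0 ω) (X n 1 ω) (blk (Δ 0 0) a) (blk (Δ 0 1) b) *
            dIIIBlock (X n 0 ω) (X n 1 ω) (blk (Δ 1 0) a) (blk (Δ 1 1) b) ∂μ
        = -(σ : ℂ) ^ 2) ∧
    ((Δ = !![0,0;1,1] ∨ Δ = !![1,1;0,0]) →
      ∫ ω, dIIIBlock (X n 0 ω) (X n 1 ω) (blk (Δ 0 0) a) (blk (Δ 0 1) b) *
            dIIIBlock (X n 0 ω) (X n 1 ω) (blk (Δ 1 0) a) (blk (Δ 1 1) b) ∂μ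
        = (σ : ℂ) ^ 2) := by
  have key : ∀ i : Fin 2, ∫ ω, X n i ω a b * X n i ω a b ∂μ = -(σ:ℂ)^2 := by
    intro i
    have h1 : ∀ ω, X n i ω a b * X n i ω a b
        = ((-(‖X n i ω a b‖)^2 : ℝ) : ℂ) := by
      intro ω
      rw [imSq _ (him n i ω a b)]
      push_cast; ring
    calc ∫ ω, X n i ω a b * X n i ω a b ∂μ
        = ∫ ω, ((-(‖X n i ω a b‖)^2 : ℝ) : ℂ) ∂μ :=
          integral_congr_ae (Filter.Eventually.of_forall h1)
      _ = ((∫ ω, -(‖X n i ω a b‖)^2 ∂μ : ℝ) : ℂ) := integral_ofReal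
      _ = -(σ:ℂ)^2 := by
          rw [integral_neg, hvar n i a b hab]; push_cast; ring
  constructor
  · rintro (rfl|rfl|rfl|rfl|rfl|rfl) <;>
      simp only [dIIIBlock, blk, Matrix.cons_val', Matrix.cons_val_zero, Matrix.cons_val_one,
        Matrix.head_cons, Matrix.empty_val', Matrix.cons_val_fin_one, Matrix.head_fin_const,
        Matrix.of_apply, Fin.isValue, one_ne_zero, reduceIte, ite_true, ite_false,
        Matrix.fromBlocks_apply₁₁, Matrix.fromBlocks_apply₁₂, Matrix.fromBlocks_apply₂₁,
        Matrix.fromBlocks_apply₂₂, Matrix.neg_apply, neg_mul_neg] <;>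
      first
        | exact key 0
        | exact key 1
  · rintro (rfl|rfl) <;>
      simp only [dIIIBlock, blk, Matrix.cons_val', Matrix.cons_val_zero, Matrix.cons_val_one,
        Matrix.head_cons, Matrix.empty_val', Matrix.cons_val_fin_one, Matrix.head_fin_const,
        Matrix.of_apply, Fin.isValue, one_ne_zero, reduceIte, ite_true, ite_false,
        Matrix.fromBlocks_apply₁₁, Matrix.fromBlocks_apply₂₂, Matrix.neg_apply,
        mul_neg, neg_mul] <;>
      rw [integral_neg, key 0] <;> ring
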